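/- Let M ∈ ℝ^{I×I} have positive diagonal entries, nonpositive off-diagonal entries, and be strictly diagonally dominant by columns. If b ∈ ℝ^I has all positive entries, then the unique solution x of M x = b has all nonnegative entries. -/

import Mathlib

/-- For a column-diagonally-dominant M-matrix `M` and a positive vector `b`, the unique
solution of `M x = b` is entrywise nonnegative. -/
theorem diag_dominant_M_matrix_solution_nonneg
    (I : ℕ) (M : Matrix (Fin I) (Fin I) ℝ)
    (hdiag : ∀ i, 0 < M i i)
    (hoff : ∀ i j, i ≠ j → M i j ≤ 0)
    (hdom : ∀ j, ∑ i ∈ Finset.univ.erase j, |M i j| < M j j)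
    (b : Fin I → ℝ) (hb : ∀ i, 0 < b i) :
    (∃! x : Fin I → ℝ, M.mulVec x = b) ∧
      ∀ x : Fin I → ℝ, M.mulVec x = b → ∀ i, 0 ≤ x i := by
  have hdet : M.det ≠ 0 := by
    apply det_ne_zero_of_sum_col_lt_diag
    intro k
    calc ∑ i ∈ Finset.univ.erase k, ‖M i k‖ = ∑ i ∈ Finset.univ.erase k, |M i k| := by
          simp [Real.norm_eq_abs]
      _ < M k k := hdom k
      _ ≤ ‖M k k‖ := le_abs_self _
  have hunit : IsUnit M.det := isUnit_iff_ne_zero.mpr hdet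
  constructor
  · refine ⟨M⁻¹.mulVec b, ?_, ?_⟩
    · show M.mulVec (M⁻¹.mulVec b) = b
      rw [Matrix.mulVec_mulVec, Matrix.mul_nonsing_inv _ hunit, Matrix.one_mulVec]
    · intro y hy
      have : M⁻¹.mulVec (M.mulVec y) = M⁻¹.mulVec b := by rw [hy]
      rwa [Matrix.mulVec_mulVec, Matrix.nonsing_inv_mul _ hunit, Matrix.one_mulVec] at this
  · intro x hx i
    by_contra hneg
    push_neg at hneg
    set S := Finset.univ.filter (fun j => x j < 0) with hS
    have hiS : i ∈ S := by simp [hS, hneg]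
    have hsum : 0 < ∑ i ∈ S, b i := Finset.sum_pos (fun j _ => hb j) ⟨i, hiS⟩
    have heq : ∑ i ∈ S, b i = ∑ j, (∑ i ∈ S, M i j) * x j := by
      simp_rw [← hx, Matrix.mulVec, dotProduct, Finset.sum_mul]
      exact Finset.sum_comm
    -- coefficient positive for j ∈ S
    have hpos : ∀ j ∈ S, 0 < ∑ i ∈ S, M i j := by
      intro j hj
      have hsplit : ∑ i ∈ S, M i j = M j j + ∑ i ∈ S.erase j, M i j := by
        rw [← Finset.add_sum_erase _ _ hj]
      have h1 : -∑ i ∈ S.erase j, M i j ≤ ∑ i ∈ S.erase j, |M i j| := by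
        rw [← Finset.sum_neg_distrib]
        exact Finset.sum_le_sum fun i _ => neg_le_abs _
      have h2 : ∑ i ∈ S.erase j, |M i j| ≤ ∑ i ∈ Finset.univ.erase j, |M i j| :=
        Finset.sum_le_sum_of_subset_of_nonneg
          (Finset.erase_subset_erase _ (Finset.subset_univ _)) (fun _ _ _ => abs_nonneg _)
      have := hdom j
      rw [hsplit]; linarith
    have hterm : ∀ j ∈ Finset.univ, (∑ i ∈ S, M i j) * x j ≤ (0 : ℝ) := by
      intro j _
      by_cases hj : j ∈ S
      · have hxj : x j < 0 := by simpa [hS] using hj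
        exact le_of_lt (mul_neg_of_pos_of_neg (hpos j hj) hxj)
      · have hxj : 0 ≤ x j := by
          have : ¬ x j < 0 := by simpa [hS] using hj
          linarith
        have hcoef : ∑ i ∈ S, M i j ≤ 0 := by
          apply Finset.sum_nonpos
          intro i hi
          exact hoff i j (by rintro rfl; exact hj hi)
        exact mul_nonpos_of_nonpos_of_nonneg hcoef hxj
    have hlt : ∑ j, (∑ i ∈ S, M i j) * x j < 0 := by
      have : ∑ j, (∑ i ∈ S, M i j) * x j < ∑ _j : Fin I, (0 : ℝ) := by
        apply Finset.sum_lt_sum hterm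
        exact ⟨i, Finset.mem_univ i, mul_neg_of_pos_of_neg (hpos i hiS) hneg⟩
      simpa using this
    linarith [heq ▸ hsum]
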